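/- Let A ∈ ℝ^{d×d} and b ≥ 2. If σ(A) ∩ rS is nonempty for some r > 0 and contains a real eigenvalue λ with log_b|λ| rational, then there exists x ∈ ℝ^d \ {0} such that the sequence (xᵀ Aⁿ x) is neither b-Benford nor eventually zero. -/

import Mathlib

open scoped Classical

/-- A real sequence is uniformly distributed mod 1. -/
def UDMod1 (x : ℕ → ℝ) : Prop :=
  ∀ a c : ℝ, 0 ≤ a → a ≤ c → c ≤ 1 →
    Filter.Tendsto
      (fun N : ℕ => (((Finset.Icc 1 N).filter fun n => Int.fract (x n) ∈ Set.Ico a c).card : ℝ) / N)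
      Filter.atTop (nhds (c - a))

/-- The base-`b` significand of `x`, with `signif b 0 = 0`. -/
noncomputable def signif (b : ℕ) (x : ℝ) : ℝ :=
  if x = 0 then 0 else (b : ℝ) ^ (Real.logb b |x| - (⌊Real.logb b |x|⌋ : ℝ))

/-- A real sequence is `b`-Benford. -/
def IsBenford (b : ℕ) (x : ℕ → ℝ) : Prop :=
  ∀ s : ℝ, 1 ≤ s → s < b →
    Filter.Tendsto
      (fun N : ℕ => (((Finset.Icc 1 N).filter fun n => signif b (x n) ≤ s).card : ℝ) / N)
      Filter.atTop (nhds (Real.logb b s))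

theorem exists_not_benford_of_rational_log_eigenvalue (d : ℕ) (A : Matrix (Fin d) (Fin d) ℝ)
    (b : ℕ) (hb : 2 ≤ b) (l : ℝ) (hl : l ≠ 0)
    (heig : Module.End.HasEigenvalue (Matrix.toLin' A) l)
    (hrat : ¬ Irrational (Real.logb b |l|)) :
    ∃ x : Fin d → ℝ, x ≠ 0 ∧
      ¬ IsBenford b (fun n => dotProduct x ((A ^ n).mulVec x)) ∧
      ¬ (∀ᶠ n in Filter.atTop, dotProduct x ((A ^ n).mulVec x) = 0) := by
  obtain ⟨x, hx⟩ := heig.exists_hasEigenvector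
  have hAx : A.mulVec x = l • x := by
    simpa [Matrix.toLin'_apply] using hx.apply_eq_smul
  have hpow : ∀ n, (A ^ n).mulVec x = l ^ n • x := by
    intro n
    induction n with
    | zero => simp [Matrix.one_mulVec]
    | succ n ih =>
      rw [pow_succ', ← Matrix.mulVec_mulVec, ih, Matrix.mulVec_smul, hAx, smul_smul, ← pow_succ]
  set c : ℝ := dotProduct x x with hc
  have hc0 : 0 < c := by
    rcases (Finset.univ.sum_nonneg fun i _ => mul_self_nonneg (x i)).lt_or_eq with h | h
    · exact h
    · exact absurd ((dotProduct_self_eq_zero).mp h.symm) hx.right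
  have ha : ∀ n : ℕ, dotProduct x ((A ^ n).mulVec x) = l ^ n * c := by
    intro n; rw [hpow, dotProduct_smul, smul_eq_mul]
  have han : ∀ n : ℕ, dotProduct x ((A ^ n).mulVec x) ≠ 0 := by
    intro n; rw [ha]; exact mul_ne_zero (pow_ne_zero _ hl) hc0.ne'
  have hb1 : (1:ℝ) < (b:ℝ) := by exact_mod_cast hb.trans_lt' one_lt_two
  -- rational log
  obtain ⟨r, hr⟩ : ∃ r : ℚ, (r : ℝ) = Real.logb b |l| := not_not.mp hrat
  set α : ℝ := Real.logb b |l| with hα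
  set β : ℝ := Real.logb b c with hβ
  set q : ℕ := r.den with hq
  have hq0 : 0 < q := r.pos
  have hlog : ∀ n : ℕ, Real.logb b |l ^ n * c| = (n:ℝ) * α + β := by
    intro n
    rw [abs_mul, abs_pow, abs_of_pos hc0, Real.logb_mul (pow_ne_zero _ (abs_ne_zero.mpr hl))
      hc0.ne', Real.logb_pow]
  -- periodicity of fract
  have key : ∀ n : ℕ, ∃ k : ℕ, k < q ∧
      Int.fract ((n:ℝ) * α + β) = Int.fract ((k:ℝ)/(q:ℝ) + β) := by
    intro n
    set p : ℤ := r.num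
    set k : ℤ := ((n:ℤ) * p) % (q:ℤ)
    set m : ℤ := ((n:ℤ) * p) / (q:ℤ)
    have hk0 : 0 ≤ k := Int.emod_nonneg _ (by exact_mod_cast hq0.ne')
    have hkq : k < (q:ℤ) := Int.emod_lt_of_pos _ (by exact_mod_cast hq0)
    refine ⟨k.toNat, by omega, ?_⟩
    have hsplit : (n:ℝ) * α + β = (k:ℝ)/(q:ℝ) + β + (m:ℝ) := by
      have hqR : ((q:ℝ)) ≠ 0 := by positivity
      have : ((n:ℤ) * p : ℝ) = (k:ℝ) + (q:ℝ) * (m:ℝ) := by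
        have := Int.emod_add_mul_ediv ((n:ℤ) * p) (q:ℤ)
        exact_mod_cast congrArg (fun z : ℤ => (z:ℝ)) this.symm
      have hαr : α = (p:ℝ)/(q:ℝ) := by
        rw [← hr, Rat.cast_def]
      rw [hαr]
      field_simp
      push_cast at this ⊢
      linarith [this]
    rw [hsplit, Int.fract_add_intCast]
    have hkk : ((k.toNat:ℕ):ℝ) = (k:ℝ) := by exact_mod_cast Int.toNat_of_nonneg hk0
    rw [hkk]
  -- finite set of significands
  set F : Finset ℝ := (Finset.range q).image
    (fun k : ℕ => (b:ℝ) ^ (Int.fract ((k:ℝ)/(q:ℝ) + β))) with hF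
  have hmem : ∀ n : ℕ, signif b (dotProduct x ((A ^ n).mulVec x)) ∈ F := by
    intro n
    obtain ⟨k, hkq, hkeq⟩ := key n
    rw [signif, if_neg (han n)]
    have : Real.logb b |dotProduct x ((A ^ n).mulVec x)| = (n:ℝ) * α + β := by
      rw [ha]; exact hlog n
    rw [this]
    have : ((n:ℝ) * α + β) - (⌊(n:ℝ) * α + β⌋ : ℝ) = Int.fract ((n:ℝ) * α + β) := rfl
    rw [this, hkeq]
    exact Finset.mem_image.mpr ⟨k, Finset.mem_range.mpr hkq, rfl⟩
  have hsig1 : ∀ n : ℕ, 1 ≤ signif b (dotProduct x ((A ^ n).mulVec x)) := by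
    intro n
    rw [signif, if_neg (han n)]
    have : (0:ℝ) ≤ Real.logb b |dotProduct x ((A ^ n).mulVec x)|
        - (⌊Real.logb b |dotProduct x ((A ^ n).mulVec x)|⌋:ℝ) := by
      rw [Int.self_sub_floor]
      exact Int.fract_nonneg _
    calc (1:ℝ) = (b:ℝ) ^ (0:ℝ) := by rw [Real.rpow_zero]
    _ ≤ _ := Real.rpow_le_rpow_of_exponent_le hb1.le this
  refine ⟨x, hx.right, ?_, ?_⟩
  · intro hB
    -- pick s₂ ∈ (1,b) \ F
    obtain ⟨s₂, hs₂mem, hs₂F⟩ := (Set.Ioo_infinite hb1).exists_notMem_finset F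
    obtain ⟨hs₂1, hs₂b⟩ := hs₂mem
    set G : Finset ℝ := insert 1 (F.filter (· < s₂)) with hG
    have hGne : G.Nonempty := ⟨1, Finset.mem_insert_self _ _⟩
    set m : ℝ := G.max' hGne with hm
    have hm1 : 1 ≤ m := G.le_max' 1 (Finset.mem_insert_self _ _)
    have hms₂ : m < s₂ := by
      apply Finset.max'_lt_iff G hGne |>.mpr
      intro y hy
      rcases Finset.mem_insert.mp hy with h | h
      · rw [h]; exact hs₂1
      · exact (Finset.mem_filter.mp h).2
    set s₁ : ℝ := (m + s₂) / 2 with hs₁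
    have hs₁m : m < s₁ := by rw [hs₁]; linarith
    have hs₁s₂ : s₁ < s₂ := by rw [hs₁]; linarith
    have heqfilter : ∀ N : ℕ,
        ((Finset.Icc 1 N).filter fun n => signif b (dotProduct x ((A ^ n).mulVec x)) ≤ s₁)
        = ((Finset.Icc 1 N).filter fun n => signif b (dotProduct x ((A ^ n).mulVec x)) ≤ s₂) := by
      intro N
      apply Finset.filter_congr
      intro n _
      constructor
      · exact fun h => h.trans hs₁s₂.le
      · intro h
        have hne : signif b (dotProduct x ((A ^ n).mulVec x)) ≠ s₂ := by
          intro he; exact hs₂F (he ▸ hmem n)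
        have hlt : signif b (dotProduct x ((A ^ n).mulVec x)) < s₂ := lt_of_le_of_ne h hne
        have : signif b (dotProduct x ((A ^ n).mulVec x)) ∈ G :=
          Finset.mem_insert_of_mem (Finset.mem_filter.mpr ⟨hmem n, hlt⟩)
        exact (G.le_max' _ this).trans hs₁m.le
    have h1 := hB s₁ (hm1.trans hs₁m.le) (hs₁s₂.trans hs₂b)
    have h2 := hB s₂ (hm1.trans hms₂.le) hs₂b
    have heq : Real.logb b s₁ = Real.logb b s₂ := by
      refine tendsto_nhds_unique ?_ h2
      convert h1 using 2 with N
      rw [heqfilter N]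
    have : Real.logb b s₁ < Real.logb b s₂ :=
      Real.logb_lt_logb hb1 (by linarith) hs₁s₂
    exact absurd heq this.ne
  · intro h
    obtain ⟨n, hn⟩ := h.exists
    exact han n hn
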